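/- Suppose a, b, c are real numbers such that for every n ≥ 2 the (n+1)×(n+1) matrix Σ with Σ_{ij} = a if i=j, Σ_{ij} = b if i≠j and i,j ≤ n, and Σ_{ij} = c otherwise, is positive semi-definite. Then b ≥ 0 (i.e., -a/(n-1) ≤ b for every n forces b ≥ 0 given a ≥ 0) and a·b ≥ c². -/

import Mathlib

open Matrix

theorem stmt15 (a b c : ℝ)
    (h : ∀ n : ℕ, 2 ≤ n →
      (Matrix.of (fun i j : Fin (n + 1) =>
        if i = j then a else if i.val < n ∧ j.val < n then b else c)).PosSemidef) :
    0 ≤ b ∧ c ^ 2 ≤ a * b := by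
  have key : ∀ n : ℕ, 2 ≤ n → ∀ t s : ℝ,
      0 ≤ (n:ℝ)*(a+((n:ℝ)-1)*b)*t^2 + 2*n*c*t*s + a*s^2 := by
    intro n hn t s
    have hpsd := h n hn
    set x : Fin (n+1) → ℝ := fun i => if (i:ℕ) < n then t else s with hx
    have h0 := hpsd.dotProduct_mulVec_nonneg x
    simp only [star_trivial, dotProduct, mulVec, Matrix.of_apply] at h0
    rw [Fin.sum_univ_castSucc] at h0
    simp only [Fin.sum_univ_castSucc (n := n)] at h0
    have hxc : ∀ i : Fin n, x i.castSucc = t := by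
      intro i; simp [hx, i.isLt]
    have hxl : x (Fin.last n) = s := by simp [hx]
    have hMl : ∀ j : Fin n, (if Fin.last n = j.castSucc then a
        else if (Fin.last n : ℕ) < n ∧ (j.castSucc : ℕ) < n then b else c) = c := by
      intro j
      rw [if_neg, if_neg]
      · simp
      · intro hc
        have := congrArg Fin.val hc
        simp at this
        omega
    have hMc : ∀ i j : Fin n, (if i.castSucc = j.castSucc then a
        else if (i.castSucc : ℕ) < n ∧ (j.castSucc : ℕ) < n then b else c)
        = if i = j then a else b := by
      intro i j
      by_cases hij : i = j
      · simp [hij]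
      · rw [if_neg (by simpa using hij), if_pos ⟨i.isLt, j.isLt⟩, if_neg hij]
    have hMcl : ∀ i : Fin n, (if i.castSucc = Fin.last n then a
        else if (i.castSucc : ℕ) < n ∧ ((Fin.last n : Fin (n+1)) : ℕ) < n then b else c) = c := by
      intro i
      rw [if_neg, if_neg]
      · simp
      · intro hc
        have := congrArg Fin.val hc
        simp at this
        omega
    simp only [hxc, hxl, hMl, hMc, hMcl, if_pos] at h0
    have hinner : ∀ i : Fin n, ∑ j : Fin n, (if i = j then a else b) * t
        = b*t*n + (a*t - b*t) := by
      intro i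
      have he : ∀ j : Fin n, (if i = j then a else b) * t
          = b*t + (if i = j then a*t - b*t else 0) := by
        intro j; split <;> ring
      simp only [he, Finset.sum_add_distrib, Finset.sum_const, Finset.card_univ,
        Fintype.card_fin, nsmul_eq_mul, Finset.sum_ite_eq, Finset.mem_univ, if_pos]
      ring
    simp only [hinner, Finset.sum_const, Finset.card_univ, Fintype.card_fin,
      nsmul_eq_mul] at h0
    nlinarith [h0]
  have ha : 0 ≤ a := by have := key 2 le_rfl 0 1; push_cast at this; linarith
  have hab : ∀ n : ℕ, 2 ≤ n → 0 ≤ a + ((n:ℝ)-1)*b := by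
    intro n hn
    have hk := key n hn 1 0
    have hnpos : (0:ℝ) < n := by positivity
    nlinarith [hk]
  have hb : 0 ≤ b := by
    by_contra hb0
    push_neg at hb0
    obtain ⟨n, hn⟩ := exists_nat_gt (max (a / (-b)) 2 + 1)
    have hn2 : 2 ≤ n := by
      have h2 : (2:ℝ) < n := by
        have := le_max_right (a/(-b)) (2:ℝ)
        linarith
      have : (2:ℕ) < n := by exact_mod_cast h2
      omega
    have hB := hab n hn2
    have hdiv : a / (-b) < (n:ℝ) - 1 := by
      have := le_max_left (a / (-b)) (2:ℝ)
      linarith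
    rw [div_lt_iff₀ (by linarith)] at hdiv
    nlinarith [hB, hdiv]
  refine ⟨hb, ?_⟩
  by_cases ha0 : a = 0
  · have hc : c = 0 := by
      by_contra hc0
      have hk := key 2 le_rfl 1 (-(2*b+1)/(4*c))
      have he : 2*(2:ℝ)*c*1*(-(2*b+1)/(4*c)) = -(2*b+1) := by
        field_simp
        ring
      push_cast at hk
      rw [he] at hk
      simp [ha0] at hk
      linarith
    simp [ha0, hc]
  · have ha' : 0 < a := lt_of_le_of_ne ha (Ne.symm ha0)
    by_contra hcab
    push_neg at hcab
    have hd : 0 < c^2 - a*b := by linarith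
    obtain ⟨n, hn⟩ := exists_nat_gt (max ((a^2 - a*b)/(c^2 - a*b)) 2 + 1)
    have h2 : (2:ℝ) < n := by
      have := le_max_right ((a^2 - a*b)/(c^2 - a*b)) (2:ℝ)
      linarith
    have hn2 : 2 ≤ n := by
      have : (2:ℕ) < n := by exact_mod_cast h2
      omega
    have hB := hab n hn2
    have hBpos : 0 < a + ((n:ℝ)-1)*b := by nlinarith [hb, h2]
    have hk := key n hn2 c (-(a + ((n:ℝ)-1)*b))
    have hnc : (n:ℝ)*c^2 ≤ a*(a + ((n:ℝ)-1)*b) := by nlinarith [hk, hBpos]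
    have hdiv : (a^2 - a*b)/(c^2 - a*b) < (n:ℝ) := by
      have := le_max_left ((a^2 - a*b)/(c^2 - a*b)) (2:ℝ)
      linarith
    rw [div_lt_iff₀ hd] at hdiv
    nlinarith [hnc, hdiv]
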